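/- arXiv:math/0605395 — 2 statements merged into one kernel-verified Lean document; each statement's English description precedes it below -/
import Mathlib

section
/- Let η ∈ D_r with k(η) ≥ 1 and suppose e^{2a(n)} = c n^{−d/k(η)} for a fixed constant c > 0, with b a fixed real. Then the difference between the expected numbers of copies of η̊ and of η tends to 0: lim_{n→∞} |E_{a(n),b}[X_n(η̊)] − E_{a(n),b}[X_n(η)]| = 0. -/
open scoped ENNReal BigOperators
open Filter

namespace Ising

noncomputable section

/-- The `L_p` norm (`1 ≤ p ≤ ∞`) of an integer vector, via the `PiLp` norm on `ℝ^d`. -/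
def lpNorm (p : ℝ≥0∞) [Fact (1 ≤ p)] {d : ℕ} (z : Fin d → ℤ) : ℝ :=
  ‖(WithLp.equiv p (Fin d → ℝ)).symm (fun i => (z i : ℝ))‖

lemma lpNorm_neg (p : ℝ≥0∞) [Fact (1 ≤ p)] {d : ℕ} (z : Fin d → ℤ) :
    lpNorm p (fun i => -(z i)) = lpNorm p z := by
  unfold lpNorm
  have h : ((WithLp.equiv p (Fin d → ℝ)).symm (fun i => ((-(z i) : ℤ) : ℝ)))
      = -((WithLp.equiv p (Fin d → ℝ)).symm fun i => ((z i : ℤ) : ℝ)) := by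
    have : (fun i => ((-(z i) : ℤ) : ℝ)) = -(fun i => ((z i : ℤ) : ℝ)) := by
      funext i; simp
    rw [this]; rfl
  rw [h, norm_neg]

/-- Vertex set of the `d`-dimensional lattice torus of size `n`:
`{0, …, n-1}^d` with componentwise arithmetic modulo `n`. -/
abbrev Vtx (d n : ℕ) := Fin d → ZMod n

/-- Configurations: a spin (`true` = `+1`, `false` = `-1`) at each vertex. -/
abbrev Conf (d n : ℕ) := Vtx d n → Bool

/-- The spin value (`±1`) of a Boolean. -/
def spin (s : Bool) : ℝ := if s then 1 else -1

/-- The lattice torus `G_n`: distinct vertices `x, y` are adjacent iff `y - x`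
(componentwise modulo `n`) admits an integer representative `z` with `‖z‖_p ≤ ρ`. -/
def torus (d ρ : ℕ) (p : ℝ≥0∞) [Fact (1 ≤ p)] (n : ℕ) : SimpleGraph (Vtx d n) where
  Adj x y := x ≠ y ∧ ∃ z : Fin d → ℤ,
    (∀ i, ((z i : ZMod n) = y i - x i)) ∧ lpNorm p z ≤ (ρ : ℝ)
  symm := ⟨by
    rintro x y ⟨hxy, z, hz, hn⟩
    refine ⟨hxy.symm, fun i => -(z i), fun i => ?_, by rw [lpNorm_neg]; exact hn⟩
    push_cast
    rw [hz i]; ring⟩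
  loopless := ⟨fun x h => h.1 rfl⟩

/-- The corresponding (infinite) lattice graph on `ℤ^d`, used as a reference to define
local configurations: distinct `x, y` are adjacent iff `‖y - x‖_p ≤ ρ`. -/
def latticeZ (d ρ : ℕ) (p : ℝ≥0∞) [Fact (1 ≤ p)] : SimpleGraph (Fin d → ℤ) where
  Adj x y := x ≠ y ∧ lpNorm p (fun i => y i - x i) ≤ (ρ : ℝ)
  symm := ⟨by
    rintro x y ⟨hxy, hn⟩
    refine ⟨hxy.symm, ?_⟩
    have h : (fun i => x i - y i) = (fun i => -(y i - x i)) := by funext i; ring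
    rw [h, lpNorm_neg]; exact hn⟩
  loopless := ⟨fun x h => h.1 rfl⟩

/-- The ball `B(x,r)` of center `x` and radius `r` for the graph distance. -/
def gball {V : Type*} (G : SimpleGraph V) (x : V) (r : ℕ) : Set V :=
  {y | G.Reachable x y ∧ G.dist x y ≤ r}

/-- The reference ball `B(0,r)` (in `ℤ^d`). -/
def refBall (d ρ : ℕ) (p : ℝ≥0∞) [Fact (1 ≤ p)] (r : ℕ) : Set (Fin d → ℤ) :=
  gball (latticeZ d ρ p) 0 r

/-- A local configuration of radius `r`: an element of `D_r = {-1,+1}^{B(0,r)}`. -/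
abbrev LocalConfig (d ρ : ℕ) (p : ℝ≥0∞) [Fact (1 ≤ p)] (r : ℕ) :=
  ↥(refBall d ρ p r) → Bool

/-- `k(η)`: the number of positive vertices of a local configuration `η`. -/
def kOf (d ρ : ℕ) (p : ℝ≥0∞) [Fact (1 ≤ p)] (r : ℕ) (η : LocalConfig d ρ p r) : ℕ :=
  Set.ncard {v : ↥(refBall d ρ p r) | η v = true}

/-- The common degree of the vertices (number of neighbors of `0` in the lattice). -/
def degZ (d ρ : ℕ) (p : ℝ≥0∞) [Fact (1 ≤ p)] : ℕ :=
  Set.ncard {z : Fin d → ℤ | (latticeZ d ρ p).Adj 0 z}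

/-- The perimeter `γ(η) = V·k(η) - 2·#{edges with both endpoints positive}`; the
number of ordered adjacent pairs of positive vertices is twice the number of such edges. -/
def perim (d ρ : ℕ) (p : ℝ≥0∞) [Fact (1 ≤ p)] (r : ℕ) (η : LocalConfig d ρ p r) : ℕ :=
  degZ d ρ p * kOf d ρ p r η -
    Set.ncard {q : ↥(refBall d ρ p r) × ↥(refBall d ρ p r) |
      (latticeZ d ρ p).Adj q.1.1 q.2.1 ∧ η q.1 = true ∧ η q.2 = true}

/-- `η` is clean if every vertex at graph distance exactly `r` from `0` is negative. -/
def Clean (d ρ : ℕ) (p : ℝ≥0∞) [Fact (1 ≤ p)] (r : ℕ) (η : LocalConfig d ρ p r) : Prop :=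
  ∀ v : ↥(refBall d ρ p r), (latticeZ d ρ p).dist 0 v.1 = r → η v = false

/-- The translate `η_x` of `η` occurs at `x` in the configuration `σ`. -/
def occursAt (d ρ : ℕ) (p : ℝ≥0∞) [Fact (1 ≤ p)] (r n : ℕ) (η : LocalConfig d ρ p r)
    (x : Vtx d n) (σ : Conf d n) : Prop :=
  ∀ v : ↥(refBall d ρ p r), σ (x + fun i => ((v.1 i : ZMod n))) = η v

/-- The indicator `I_x^η` (as a real number). -/
def occInd (d ρ : ℕ) (p : ℝ≥0∞) [Fact (1 ≤ p)] (r n : ℕ) (η : LocalConfig d ρ p r)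
    (x : Vtx d n) (σ : Conf d n) : ℝ := by
  classical exact if occursAt d ρ p r n η x σ then 1 else 0

/-- `X_n(η) = Σ_x I_x^η`: the number of copies of `η` in `G_n`. -/
def Xcount (d ρ : ℕ) (p : ℝ≥0∞) [Fact (1 ≤ p)] (r n : ℕ) (η : LocalConfig d ρ p r)
    (σ : Conf d n) : ℕ :=
  Set.ncard {x : Vtx d n | occursAt d ρ p r n η x σ}

/-- The interaction term `Σ_{{x,y} ∈ E_n} σ(x)σ(y)`. -/
def pairSum (d ρ : ℕ) (p : ℝ≥0∞) [Fact (1 ≤ p)] (n : ℕ) (σ : Conf d n) : ℝ :=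
  ∑' e : ↥(torus d ρ p n).edgeSet,
    Sym2.lift ⟨fun x y => spin (σ x) * spin (σ y), fun _ _ => mul_comm _ _⟩
      (e : Sym2 (Vtx d n))

/-- The Hamiltonian `a Σ_x σ(x) + b Σ_{{x,y} ∈ E_n} σ(x)σ(y)`. -/
def hamiltonian (d ρ : ℕ) (p : ℝ≥0∞) [Fact (1 ≤ p)] (n : ℕ) (a b : ℝ) (σ : Conf d n) : ℝ :=
  a * (∑' x : Vtx d n, spin (σ x)) + b * pairSum d ρ p n σ

/-- The (unnormalized) Gibbs weight of a configuration. -/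
def weight (d ρ : ℕ) (p : ℝ≥0∞) [Fact (1 ≤ p)] (n : ℕ) (a b : ℝ) (σ : Conf d n) : ℝ :=
  Real.exp (hamiltonian d ρ p n a b σ)

/-- The partition function `Z_{a,b}`. -/
def partZ (d ρ : ℕ) (p : ℝ≥0∞) [Fact (1 ≤ p)] (n : ℕ) (a b : ℝ) : ℝ :=
  ∑' σ : Conf d n, weight d ρ p n a b σ

/-- The Ising (Gibbs) probability `μ_{a,b}(A)` of an event `A ⊆ X_n`. -/
def prob (d ρ : ℕ) (p : ℝ≥0∞) [Fact (1 ≤ p)] (n : ℕ) (a b : ℝ) (A : Set (Conf d n)) : ℝ :=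
  (∑' σ : ↥A, weight d ρ p n a b (σ : Conf d n)) / partZ d ρ p n a b

/-- The expectation `E_{a,b}[f]`. -/
def expect (d ρ : ℕ) (p : ℝ≥0∞) [Fact (1 ≤ p)] (n : ℕ) (a b : ℝ) (f : Conf d n → ℝ) : ℝ :=
  (∑' σ : Conf d n, weight d ρ p n a b σ * f σ) / partZ d ρ p n a b

/-- The variance `Var_{a,b}[f]`. -/
def varE (d ρ : ℕ) (p : ℝ≥0∞) [Fact (1 ≤ p)] (n : ℕ) (a b : ℝ) (f : Conf d n → ℝ) : ℝ :=
  expect d ρ p n a b (fun σ => (f σ - expect d ρ p n a b f) ^ 2)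

/-- The event `{I_x^η = 1}`. -/
def event (d ρ : ℕ) (p : ℝ≥0∞) [Fact (1 ≤ p)] (r n : ℕ) (η : LocalConfig d ρ p r)
    (x : Vtx d n) : Set (Conf d n) :=
  {σ | occursAt d ρ p r n η x σ}

/-- The event that a configuration agrees with `σ₀` on `W`. -/
def agreeOn (d n : ℕ) (W : Set (Vtx d n)) (σ₀ : Conf d n) : Set (Conf d n) :=
  {τ | ∀ x ∈ W, τ x = σ₀ x}

/-- The conditional probability `μ_{a,b}(A | σ₀ on W)`. -/
def condProb (d ρ : ℕ) (p : ℝ≥0∞) [Fact (1 ≤ p)] (n : ℕ) (a b : ℝ) (A : Set (Conf d n))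
    (W : Set (Vtx d n)) (σ₀ : Conf d n) : ℝ :=
  prob d ρ p n a b (A ∩ agreeOn d n W σ₀) / prob d ρ p n a b (agreeOn d n W σ₀)

/-- The exterior boundary `δV` of a set of vertices of the torus. -/
def boundary (d ρ : ℕ) (p : ℝ≥0∞) [Fact (1 ≤ p)] (n : ℕ) (V : Set (Vtx d n)) :
    Set (Vtx d n) :=
  {y | y ∉ V ∧ ∃ x ∈ V, (torus d ρ p n).Adj x y}

/-- The ball `B(x,R)` in the torus. -/
def tball (d ρ : ℕ) (p : ℝ≥0∞) [Fact (1 ≤ p)] (n : ℕ) (x : Vtx d n) (R : ℕ) :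
    Set (Vtx d n) :=
  gball (torus d ρ p n) x R

/-- The distribution (probability mass function on `ℕ`) of an integer-valued observable. -/
def lawOf (d ρ : ℕ) (p : ℝ≥0∞) [Fact (1 ≤ p)] (n : ℕ) (a b : ℝ) (X : Conf d n → ℕ) :
    ℕ → ℝ :=
  fun m => prob d ρ p n a b {σ | X σ = m}

/-- The distribution on `ℕ` of a real-valued (integer-valued in fact) observable. -/
def lawR (d ρ : ℕ) (p : ℝ≥0∞) [Fact (1 ≤ p)] (n : ℕ) (a b : ℝ) (X : Conf d n → ℝ) :
    ℕ → ℝ :=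
  fun m => prob d ρ p n a b {σ | X σ = (m : ℝ)}

/-- The Poisson distribution with parameter `θ`, as a pmf on `ℕ`. -/
def poissonPMF (θ : ℝ) : ℕ → ℝ :=
  fun m => Real.exp (-θ) * θ ^ m / (Nat.factorial m : ℝ)

/-- Total variation distance between two distributions on `ℕ`:
`d_TV(μ,ν) = sup_A |μ(A) - ν(A)|`. -/
def dTV (f g : ℕ → ℝ) : ℝ :=
  ⨆ A : Set ℕ, |(∑' m : ↥A, f (m : ℕ)) - ∑' m : ↥A, g (m : ℕ)|

/-- The clean extension `η̊ ∈ D_{r+1}` of `η ∈ D_r`: it agrees with `η` on `B(0,r)` and is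
negative at every vertex at distance exactly `r+1` from `0`. -/
def ringExt (d ρ : ℕ) (p : ℝ≥0∞) [Fact (1 ≤ p)] (r : ℕ) (η : LocalConfig d ρ p r) :
    LocalConfig d ρ p (r + 1) := by
  classical exact fun v => if h : v.1 ∈ refBall d ρ p r then η ⟨v.1, h⟩ else false

/-- `D_r(η) = {η' ∈ D_r : V_+(η') ⊇ V_+(η)}`. -/
def Dfam (d ρ : ℕ) (p : ℝ≥0∞) [Fact (1 ≤ p)] (r : ℕ) (η : LocalConfig d ρ p r) :
    Set (LocalConfig d ρ p r) :=
  {η' | ∀ v, η v = true → η' v = true}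

/-- `Ī_x^η = Σ_{η' ∈ D_r(η)} I_x^{η'}`. -/
def barInd (d ρ : ℕ) (p : ℝ≥0∞) [Fact (1 ≤ p)] (r n : ℕ) (η : LocalConfig d ρ p r)
    (x : Vtx d n) (σ : Conf d n) : ℝ :=
  ∑' η' : ↥(Dfam d ρ p r η), occInd d ρ p r n (η' : LocalConfig d ρ p r) x σ

/-- `X̄_n(η) = Σ_x Ī_x^η`. -/
def Xbar (d ρ : ℕ) (p : ℝ≥0∞) [Fact (1 ≤ p)] (r n : ℕ) (η : LocalConfig d ρ p r)
    (σ : Conf d n) : ℝ :=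
  ∑' x : Vtx d n, barInd d ρ p r n η x σ

/-- The closed neighbourhood `B̄ = B ∪ δB` of a torus ball. -/
def cball (d ρ : ℕ) (p : ℝ≥0∞) [Fact (1 ≤ p)] (n : ℕ) (x : Vtx d n) (r : ℕ) :
    Set (Vtx d n) :=
  tball d ρ p n x r ∪ boundary d ρ p n (tball d ρ p n x r)

/-- One step of the connectivity relation between the balls of radius `r` centered at the
entries of a tuple: `B̄(x_i) ∩ B(x_j) ≠ ∅`. -/
def stepRel (d ρ : ℕ) (p : ℝ≥0∞) [Fact (1 ≤ p)] (n r : ℕ) {l : ℕ} (x : Fin l → Vtx d n)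
    (i j : Fin l) : Prop :=
  (cball d ρ p n (x i) r ∩ tball d ρ p n (x j) r).Nonempty

/-- The number of equivalence classes, for the connectivity relation, of the set of balls
`{B(x_1,r), …, B(x_l,r)}`. -/
def numClasses (d ρ : ℕ) (p : ℝ≥0∞) [Fact (1 ≤ p)] (n r : ℕ) {l : ℕ}
    (x : Fin l → Vtx d n) : ℕ :=
  Set.ncard (Set.range fun i : Fin l =>
    {j : Fin l | Relation.EqvGen (stepRel d ρ p n r x) i j})

/-- `C_l(s)`: the set of `l`-tuples of vertices whose set of balls of radius `r` is composed
of exactly `s` equivalence classes for the connectivity relation. -/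
def tupleClass (d ρ : ℕ) (p : ℝ≥0∞) [Fact (1 ≤ p)] (n r l s : ℕ) :
    Set (Fin l → Vtx d n) :=
  {x | numClasses d ρ p n r x = s}


section C1
variable {d ρ : ℕ} {p : ℝ≥0∞} [Fact (1 ≤ p)]

lemma piLp_coord_le (f : PiLp p (fun _ : Fin d => ℝ)) (i : Fin d) : ‖f i‖ ≤ ‖f‖ := by
  rcases p.dichotomy with hp' | hp'
  · subst hp'
    rw [PiLp.norm_eq_ciSup]
    exact le_ciSup (f := fun j => ‖f j‖) (Finite.bddAbove_range _) i
  · have hpt : 0 < p.toReal := lt_of_lt_of_le one_pos hp'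
    rw [PiLp.norm_eq_sum hpt]
    have h1 : ‖f i‖ ^ p.toReal ≤ ∑ j, ‖f j‖ ^ p.toReal := by
      refine Finset.single_le_sum (fun j _ => Real.rpow_nonneg (norm_nonneg _) _) (Finset.mem_univ i)
    calc ‖f i‖ = (‖f i‖ ^ p.toReal) ^ (1 / p.toReal) := by
          rw [← Real.rpow_mul (norm_nonneg _), mul_one_div_cancel hpt.ne', Real.rpow_one]
      _ ≤ _ := Real.rpow_le_rpow (Real.rpow_nonneg (norm_nonneg _) _) h1 (by positivity)

lemma abs_coord_le_lpNorm (z : Fin d → ℤ) (i : Fin d) :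
    (|z i| : ℝ) ≤ lpNorm p z := by
  have := piLp_coord_le ((WithLp.equiv p (Fin d → ℝ)).symm (fun i => (z i : ℝ))) i
  simpa [lpNorm, PiLp.toLp_apply, Real.norm_eq_abs] using this

lemma adj_coord_le {u v : Fin d → ℤ} (h : (latticeZ d ρ p).Adj u v) (i : Fin d) :
    |v i - u i| ≤ (ρ : ℤ) := by
  have h1 : (|v i - u i| : ℝ) ≤ (ρ : ℝ) :=
    le_trans (by exact_mod_cast abs_coord_le_lpNorm (fun j => v j - u j) i) h.2
  exact_mod_cast h1

lemma walk_coord_le {u v : Fin d → ℤ} (w : (latticeZ d ρ p).Walk u v) (i : Fin d) :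
    |v i - u i| ≤ (ρ : ℤ) * w.length := by
  induction w with
  | nil => simp
  | cons h w ih =>
    rename_i x y z
    have h1 := adj_coord_le h i
    calc |z i - x i| = |(z i - y i) + (y i - x i)| := by ring_nf
      _ ≤ |z i - y i| + |y i - x i| := abs_add_le _ _
      _ ≤ (ρ:ℤ) * w.length + ρ := add_le_add ih h1
      _ = _ := by push_cast [SimpleGraph.Walk.length_cons]; ring

lemma refBall_coord {r : ℕ} {v : Fin d → ℤ} (hv : v ∈ refBall d ρ p r) (i : Fin d) :
    |v i| ≤ (ρ : ℤ) * r := by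
  obtain ⟨hreach, hdist⟩ := hv
  obtain ⟨w, hw⟩ := hreach.exists_walk_length_eq_dist
  have := walk_coord_le w i
  rw [hw] at this
  simp only [Pi.zero_apply, sub_zero] at this
  calc |v i| ≤ (ρ:ℤ) * (latticeZ d ρ p).dist 0 v := by simpa using this
    _ ≤ (ρ:ℤ) * r := by
        have : ((latticeZ d ρ p).dist 0 v : ℤ) ≤ (r : ℤ) := by exact_mod_cast hdist
        exact mul_le_mul_of_nonneg_left this (by positivity)

lemma refBall_finite (r : ℕ) : (refBall d ρ p r).Finite := by
  have hsub : refBall d ρ p r ⊆ Set.pi Set.univ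
      (fun _ : Fin d => (Finset.Icc (-((ρ:ℤ)*r)) ((ρ:ℤ)*r) : Set ℤ)) := by
    intro v hv i _
    simpa [Finset.mem_Icc, abs_le] using (abs_le.mp (refBall_coord hv i))
  exact Set.Finite.subset (Set.Finite.pi (fun i => Finset.finite_toSet _)) hsub

lemma refBall_mono {r : ℕ} : refBall d ρ p r ⊆ refBall d ρ p (r+1) := by
  rintro v ⟨h1, h2⟩
  exact ⟨h1, h2.trans (Nat.le_succ r)⟩

end C1
section C2
open scoped Classical
variable {d ρ : ℕ} {p : ℝ≥0∞} [Fact (1 ≤ p)] {n : ℕ} [NeZero n]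

lemma emb_inj {L : ℕ} (hn : 2*L < n) {u v : Fin d → ℤ}
    (hu : ∀ i, |u i| ≤ (L:ℤ)) (hv : ∀ i, |v i| ≤ (L:ℤ)) (x : Vtx d n)
    (h : (x + fun i => ((u i : ZMod n))) = (x + fun i => ((v i : ZMod n)))) : u = v := by
  have h2 : (fun i => ((u i : ZMod n))) = (fun i => ((v i : ZMod n))) :=
    add_left_cancel h
  funext i
  have h3 : ((u i : ZMod n)) = ((v i : ZMod n)) := congrFun h2 i
  have h4 : (n:ℤ) ∣ (v i - u i) :=
    Int.ModEq.dvd ((ZMod.intCast_eq_intCast_iff _ _ _).mp h3)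
  have h5 : |v i - u i| < (n:ℤ) := by
    calc |v i - u i| ≤ |v i| + |u i| := abs_sub _ _
      _ ≤ (L:ℤ) + L := add_le_add (hv i) (hu i)
      _ < n := by exact_mod_cast (by omega : L + L < n)
  have h6 := Int.eq_zero_of_abs_lt_dvd h4 h5
  omega

lemma spin_true : spin true = 1 := rfl
lemma spin_false : spin false = -1 := rfl
lemma abs_spin (s : Bool) : |spin s| = 1 := by cases s <;> simp [spin]

/-- The summand of `pairSum`. -/
def edgeTerm (σ : Conf d n) : Sym2 (Vtx d n) → ℝ :=
  Sym2.lift ⟨fun x y => spin (σ x) * spin (σ y), fun _ _ => mul_comm _ _⟩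

lemma pairSum_eq (σ : Conf d n) :
    pairSum d ρ p n σ = ∑ e : (torus d ρ p n).edgeSet, edgeTerm σ e.1 :=
  tsum_fintype _

lemma abs_edgeTerm (σ : Conf d n) (e : Sym2 (Vtx d n)) : |edgeTerm σ e| = 1 := by
  induction e using Sym2.ind with
  | _ u v => simp [edgeTerm, abs_mul, abs_spin]

lemma edgeTerm_congr {σ τ : Conf d n} {e : Sym2 (Vtx d n)}
    (h : ∀ y ∈ e, σ y = τ y) : edgeTerm σ e = edgeTerm τ e := by
  induction e using Sym2.ind with
  | _ u v =>
    simp only [edgeTerm, Sym2.lift_mk]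
    rw [h u (Sym2.mem_mk_left _ _), h v (Sym2.mem_mk_right _ _)]

lemma incidence_card_le (y : Vtx d n) :
    (Finset.univ.filter (fun e : (torus d ρ p n).edgeSet => y ∈ (e.1 : Sym2 (Vtx d n)))).card
      ≤ (2*ρ+1)^d := by
  classical
  set G := torus d ρ p n with hG
  set box : Finset (Fin d → ℤ) := Fintype.piFinset (fun _ : Fin d => Finset.Icc (-(ρ:ℤ)) (ρ:ℤ))
    with hbox
  have hcard : box.card = (2*ρ+1)^d := by
    rw [hbox, Fintype.card_piFinset]
    simp only [Int.card_Icc]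
    rw [Finset.prod_const, Finset.card_univ, Fintype.card_fin]
    congr 1
    omega
  rw [← hcard]
  -- the map from incident edges to representatives
  have key : ∀ e : G.edgeSet, ∀ h : y ∈ (e.1 : Sym2 (Vtx d n)),
      ∃ z : Fin d → ℤ, (∀ i, ((z i : ZMod n) = (Sym2.Mem.other h) i - y i)) ∧
        lpNorm p z ≤ (ρ : ℝ) := by
    intro e h
    have he := e.2
    rw [← Sym2.other_spec h] at he
    exact ((SimpleGraph.mem_edgeSet _).mp he).2
  refine Finset.card_le_card_of_injOn
    (fun e => if h : y ∈ (e.1 : Sym2 (Vtx d n)) then Classical.choose (key e h) else 0)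
    ?_ ?_
  · intro e he
    simp only [Finset.mem_coe, Finset.mem_filter] at he
    dsimp only
    rw [dif_pos he.2]
    obtain ⟨hz1, hz2⟩ := Classical.choose_spec (key e he.2)
    rw [Finset.mem_coe, hbox, Fintype.mem_piFinset]
    intro i
    rw [Finset.mem_Icc, ← abs_le]
    have : (|Classical.choose (key e he.2) i| : ℝ) ≤ (ρ:ℝ) :=
      le_trans (abs_coord_le_lpNorm _ i) hz2
    exact_mod_cast this
  · intro e₁ h₁ e₂ h₂ hf
    simp only [Finset.mem_coe, Finset.mem_filter] at h₁ h₂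
    dsimp only at hf
    rw [dif_pos h₁.2, dif_pos h₂.2] at hf
    obtain ⟨hz1, _⟩ := Classical.choose_spec (key e₁ h₁.2)
    obtain ⟨hz2, _⟩ := Classical.choose_spec (key e₂ h₂.2)
    have hother : Sym2.Mem.other h₁.2 = Sym2.Mem.other h₂.2 := by
      funext i
      have e1 : (Sym2.Mem.other h₁.2) i = y i + (Classical.choose (key e₁ h₁.2) i : ZMod n) := by
        rw [hz1 i]; ring
      have e2 : (Sym2.Mem.other h₂.2) i = y i + (Classical.choose (key e₂ h₂.2) i : ZMod n) := by
        rw [hz2 i]; ring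
      rw [e1, e2, hf]
    have : (e₁.1 : Sym2 (Vtx d n)) = e₂.1 := by
      rw [← Sym2.other_spec h₁.2, ← Sym2.other_spec h₂.2, hother]
    exact Subtype.ext this

lemma pairSum_flip_bound (P : Finset (Vtx d n)) (σ τ : Conf d n)
    (hagree : ∀ y, y ∉ P → σ y = τ y) :
    |pairSum d ρ p n σ - pairSum d ρ p n τ| ≤ 2 * ((2*ρ+1)^d * P.card) := by
  classical
  rw [pairSum_eq, pairSum_eq, ← Finset.sum_sub_distrib]
  set G := torus d ρ p n with hG
  set T : Finset G.edgeSet :=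
    Finset.univ.filter (fun e => ∃ y ∈ P, y ∈ (e.1 : Sym2 (Vtx d n))) with hT
  have hzero : ∀ e ∈ Finset.univ, e ∉ T → edgeTerm σ (e : G.edgeSet).1 - edgeTerm τ e.1 = 0 := by
    intro e _ he
    rw [hT, Finset.mem_filter] at he
    push_neg at he
    have : ∀ y ∈ (e.1 : Sym2 (Vtx d n)), σ y = τ y := by
      intro y hy
      by_cases hyP : y ∈ P
      · exact absurd hy (he (Finset.mem_univ e) y hyP)
      · exact hagree y hyP
    rw [edgeTerm_congr this, sub_self]
  rw [← Finset.sum_subset (Finset.subset_univ T) hzero]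
  have hTcard : T.card ≤ P.card * (2*ρ+1)^d := by
    have hsub : T ⊆ P.biUnion (fun y =>
        Finset.univ.filter (fun e : G.edgeSet => y ∈ (e.1 : Sym2 (Vtx d n)))) := by
      intro e he
      rw [hT, Finset.mem_filter] at he
      obtain ⟨y, hyP, hye⟩ := he.2
      exact Finset.mem_biUnion.mpr ⟨y, hyP, Finset.mem_filter.mpr ⟨Finset.mem_univ _, hye⟩⟩
    calc T.card ≤ _ := Finset.card_le_card hsub
      _ ≤ ∑ y ∈ P, (Finset.univ.filter
          (fun e : G.edgeSet => y ∈ (e.1 : Sym2 (Vtx d n)))).card := Finset.card_biUnion_le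
      _ ≤ ∑ _y ∈ P, (2*ρ+1)^d := Finset.sum_le_sum (fun y _ => incidence_card_le y)
      _ = P.card * (2*ρ+1)^d := by rw [Finset.sum_const, smul_eq_mul]
  calc |∑ e ∈ T, (edgeTerm σ (e : G.edgeSet).1 - edgeTerm τ e.1)|
      ≤ ∑ e ∈ T, |edgeTerm σ (e : G.edgeSet).1 - edgeTerm τ e.1| :=
        Finset.abs_sum_le_sum_abs _ _
    _ ≤ ∑ _e ∈ T, 2 := Finset.sum_le_sum (fun e _ => by
        calc |edgeTerm σ (e : G.edgeSet).1 - edgeTerm τ e.1|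
            ≤ |edgeTerm σ e.1| + |edgeTerm τ e.1| := abs_sub _ _
          _ ≤ 2 := by rw [abs_edgeTerm, abs_edgeTerm]; norm_num)
    _ = 2 * T.card := by rw [Finset.sum_const, nsmul_eq_mul]; ring
    _ ≤ 2 * ((2*ρ+1)^d * P.card) := by
        have : (T.card : ℝ) ≤ ((2*ρ+1)^d * P.card : ℕ) := by
          exact_mod_cast hTcard.trans (le_of_eq (Nat.mul_comm _ _))
        push_cast at this ⊢
        linarith

lemma flip_spinsum (P : Finset (Vtx d n)) (σ : Conf d n) (hP : ∀ y ∈ P, σ y = true) :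
    (∑ y : Vtx d n, spin (σ y)) -
      ∑ y : Vtx d n, spin (if y ∈ P then false else σ y) = 2 * P.card := by
  rw [← Finset.sum_sub_distrib]
  have hzero : ∀ y ∈ Finset.univ, y ∉ P →
      spin (σ y) - spin (if y ∈ P then false else σ y) = 0 := by
    intro y _ hy; rw [if_neg hy, sub_self]
  rw [← Finset.sum_subset (Finset.subset_univ P) hzero]
  have : ∀ y ∈ P, spin (σ y) - spin (if y ∈ P then false else σ y) = 2 := by
    intro y hy; rw [hP y hy, if_pos hy, spin_true, spin_false]; norm_num
  rw [Finset.sum_congr rfl this, Finset.sum_const, nsmul_eq_mul]; ring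

lemma hamiltonian_eq (a b : ℝ) (σ : Conf d n) :
    hamiltonian d ρ p n a b σ = a * ∑ x : Vtx d n, spin (σ x) + b * pairSum d ρ p n σ := by
  unfold hamiltonian
  rw [tsum_fintype]

lemma flip_weight_le (a b : ℝ) (P : Finset (Vtx d n)) (σ : Conf d n)
    (hP : ∀ y ∈ P, σ y = true) :
    weight d ρ p n a b σ ≤
      Real.exp (2*a*P.card + 2 * |b| * ((2*ρ+1)^d * P.card)) *
        weight d ρ p n a b (fun y => if y ∈ P then false else σ y) := by
  set τ : Conf d n := fun y => if y ∈ P then false else σ y with hτ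
  have hham : hamiltonian d ρ p n a b σ - hamiltonian d ρ p n a b τ ≤
      2*a*P.card + 2 * |b| * ((2*ρ+1)^d * P.card) := by
    rw [hamiltonian_eq, hamiltonian_eq]
    have hs := flip_spinsum P σ hP
    have hpair := pairSum_flip_bound (ρ := ρ) (p := p) P σ τ (fun y hy => by rw [hτ]; simp [if_neg hy])
    have h1 : a * (∑ x : Vtx d n, spin (σ x)) + b * pairSum d ρ p n σ -
        (a * (∑ x : Vtx d n, spin (τ x)) + b * pairSum d ρ p n τ)
        = a * ((∑ x : Vtx d n, spin (σ x)) - ∑ x : Vtx d n, spin (τ x)) +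
          b * (pairSum d ρ p n σ - pairSum d ρ p n τ) := by ring
    rw [h1]
    have h2 : (∑ x : Vtx d n, spin (σ x)) - ∑ x : Vtx d n, spin (τ x) = 2 * P.card := hs
    rw [h2]
    have h3 : b * (pairSum d ρ p n σ - pairSum d ρ p n τ) ≤
        |b| * (2 * ((2*ρ+1)^d * P.card)) := by
      calc b * (pairSum d ρ p n σ - pairSum d ρ p n τ) ≤ |b * (pairSum d ρ p n σ - pairSum d ρ p n τ)| := le_abs_self _
        _ = |b| * |pairSum d ρ p n σ - pairSum d ρ p n τ| := abs_mul _ _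
        _ ≤ |b| * (2 * ((2*ρ+1)^d * P.card)) :=
            mul_le_mul_of_nonneg_left hpair (abs_nonneg b)
    nlinarith [h3]
  calc weight d ρ p n a b σ
      = Real.exp (hamiltonian d ρ p n a b σ - hamiltonian d ρ p n a b τ) *
        weight d ρ p n a b τ := by
        unfold weight; rw [← Real.exp_add]; congr 1; ring
    _ ≤ _ := mul_le_mul_of_nonneg_right (Real.exp_le_exp.mpr hham) (Real.exp_nonneg _)

end C2
section C3
open scoped Classical
variable {d ρ : ℕ} {p : ℝ≥0∞} [Fact (1 ≤ p)] {n : ℕ} [NeZero n]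

lemma weight_nonneg (a b : ℝ) (σ : Conf d n) : 0 ≤ weight d ρ p n a b σ :=
  Real.exp_nonneg _

lemma partZ_eq (a b : ℝ) : partZ d ρ p n a b = ∑ σ : Conf d n, weight d ρ p n a b σ :=
  tsum_fintype _

lemma event_weight_bound {r : ℕ} (η : LocalConfig d ρ p r) (a b : ℝ)
    (hn : 2*(ρ*(r+1)) < n) (x : Vtx d n) {w : Fin d → ℤ}
    (hw1 : w ∈ refBall d ρ p (r+1)) (hw2 : w ∉ refBall d ρ p r) :
    ∑ σ : Conf d n, (if (occursAt d ρ p r n η x σ ∧ σ (x + fun i => ((w i : ZMod n))) = true)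
        then weight d ρ p n a b σ else 0)
      ≤ Real.exp (2*a*(kOf d ρ p r η + 1) +
          2 * |b| * ((2*ρ+1)^d * (kOf d ρ p r η + 1))) * partZ d ρ p n a b := by
  classical
  set k := kOf d ρ p r η with hk
  set emb : (Fin d → ℤ) → Vtx d n := fun v => x + fun i => ((v i : ZMod n)) with hemb
  have hBfin : (refBall d ρ p r).Finite := refBall_finite r
  set posS : Set (Fin d → ℤ) := Subtype.val '' {v : ↥(refBall d ρ p r) | η v = true}
    with hposS
  have hposSsub : posS ⊆ refBall d ρ p r := by
    rintro z ⟨v, _, rfl⟩; exact v.2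
  have hposfin : posS.Finite := hBfin.subset hposSsub
  have hposcard : posS.ncard = k := by
    rw [hposS, Set.ncard_image_of_injective _ Subtype.val_injective]; rfl
  set PZ : Set (Fin d → ℤ) := insert w posS with hPZ
  have hPZfin : PZ.Finite := hposfin.insert w
  have hwpos : w ∉ posS := fun hw => hw2 (hposSsub hw)
  have hPZcard : PZ.ncard = k + 1 := by
    rw [hPZ, Set.ncard_insert_of_notMem hwpos hposfin, hposcard]
  have hcoord : ∀ z ∈ PZ, ∀ i, |z i| ≤ ((ρ*(r+1) : ℕ) : ℤ) := by
    intro z hz i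
    rcases hz with rfl | hz
    · have := refBall_coord hw1 i
      calc |z i| ≤ (ρ:ℤ) * (r+1) := this
        _ = ((ρ*(r+1) : ℕ) : ℤ) := by push_cast; ring
    · have := refBall_coord (hposSsub hz) i
      calc |z i| ≤ (ρ:ℤ) * r := this
        _ ≤ ((ρ*(r+1) : ℕ) : ℤ) := by push_cast; nlinarith
  have hembinj : Set.InjOn emb PZ := fun u hu v hv h =>
    emb_inj hn (hcoord u hu) (hcoord v hv) x h
  set P : Finset (Vtx d n) := (hPZfin.image emb).toFinset with hP
  have hPcard : P.card = k + 1 := by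
    rw [hP, ← Set.ncard_eq_toFinset_card, Set.ncard_image_of_injOn hembinj, hPZcard]
  set pred : Conf d n → Prop := fun σ =>
    occursAt d ρ p r n η x σ ∧ σ (x + fun i => ((w i : ZMod n))) = true with hpred
  have hPtrue : ∀ σ, pred σ → ∀ y ∈ P, σ y = true := by
    intro σ hσ y hy
    rw [hP, Set.Finite.mem_toFinset] at hy
    obtain ⟨z, hz, rfl⟩ := hy
    rcases hz with rfl | hz
    · exact hσ.2
    · obtain ⟨v, hv, rfl⟩ := hz
      have := hσ.1 v
      rw [hemb]
      rw [this, hv]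
  set flip : Conf d n → Conf d n := fun σ y => if y ∈ P then false else σ y with hflip
  have hflipinj : Set.InjOn flip (Finset.univ.filter pred) := by
    intro σ₁ h₁ σ₂ h₂ hf
    rw [Finset.coe_filter] at h₁ h₂
    funext y
    by_cases hy : y ∈ P
    · rw [hPtrue σ₁ h₁.2 y hy, hPtrue σ₂ h₂.2 y hy]
    · have := congrFun hf y
      rw [hflip] at this
      simpa [if_neg hy] using this
  have hflipw : ∀ σ ∈ Finset.univ.filter pred,
      weight d ρ p n a b σ ≤
        Real.exp (2*a*(k+1) + 2 * |b| * ((2*ρ+1)^d * (k+1))) *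
          weight d ρ p n a b (flip σ) := by
    intro σ hσ
    rw [Finset.mem_filter] at hσ
    have := flip_weight_le (ρ := ρ) (p := p) a b P σ (hPtrue σ hσ.2)
    rw [hPcard] at this
    convert this using 4 <;> push_cast <;> ring
  calc ∑ σ : Conf d n, (if pred σ then weight d ρ p n a b σ else 0)
      = ∑ σ ∈ Finset.univ.filter pred, weight d ρ p n a b σ :=
        (Finset.sum_filter _ _).symm
    _ ≤ ∑ σ ∈ Finset.univ.filter pred,
        Real.exp (2*a*(k+1) + 2 * |b| * ((2*ρ+1)^d * (k+1))) *
          weight d ρ p n a b (flip σ) := Finset.sum_le_sum hflipw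
    _ = Real.exp (2*a*(k+1) + 2 * |b| * ((2*ρ+1)^d * (k+1))) *
        ∑ σ ∈ Finset.univ.filter pred, weight d ρ p n a b (flip σ) := by
        rw [Finset.mul_sum]
    _ ≤ _ := by
        have h1 : ∑ σ ∈ Finset.univ.filter pred, weight d ρ p n a b (flip σ)
            = ∑ τ ∈ (Finset.univ.filter pred).image flip, weight d ρ p n a b τ :=
          (Finset.sum_image (fun σ₁ h₁ σ₂ h₂ h =>
            hflipinj (by simpa using h₁) (by simpa using h₂) h)).symm
        rw [h1, partZ_eq]
        refine mul_le_mul_of_nonneg_left ?_ (Real.exp_nonneg _)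
        exact Finset.sum_le_sum_of_subset_of_nonneg (Finset.subset_univ _)
          (fun τ _ _ => weight_nonneg a b τ)

end C3
section C4
open scoped Classical
variable {d ρ : ℕ} {p : ℝ≥0∞} [Fact (1 ≤ p)] {n : ℕ} [NeZero n]

lemma occursAt_ringExt {r : ℕ} (η : LocalConfig d ρ p r) (x : Vtx d n) (σ : Conf d n)
    (h : occursAt d ρ p (r+1) n (ringExt d ρ p r η) x σ) : occursAt d ρ p r n η x σ := by
  intro v
  have hv' : v.1 ∈ refBall d ρ p (r+1) := refBall_mono v.2
  have h2 := h ⟨v.1, hv'⟩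
  rw [h2]
  show ringExt d ρ p r η ⟨v.1, hv'⟩ = η v
  unfold ringExt
  rw [dif_pos v.2]

lemma exists_ring_pos {r : ℕ} (η : LocalConfig d ρ p r) (x : Vtx d n) (σ : Conf d n)
    (h1 : occursAt d ρ p r n η x σ) (h2 : ¬ occursAt d ρ p (r+1) n (ringExt d ρ p r η) x σ) :
    ∃ w : Fin d → ℤ, (w ∈ refBall d ρ p (r+1) ∧ w ∉ refBall d ρ p r) ∧
      σ (x + fun i => ((w i : ZMod n))) = true := by
  unfold occursAt at h2
  push_neg at h2
  obtain ⟨v, hv⟩ := h2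
  by_cases hB : v.1 ∈ refBall d ρ p r
  · exfalso
    apply hv
    have h3 := h1 ⟨v.1, hB⟩
    rw [h3]
    show η ⟨v.1, hB⟩ = ringExt d ρ p r η v
    unfold ringExt
    rw [dif_pos hB]
  · refine ⟨v.1, ⟨v.2, hB⟩, ?_⟩
    have h4 : ringExt d ρ p r η v = false := by
      unfold ringExt
      rw [dif_neg hB]
    rw [h4] at hv
    exact Bool.not_eq_false _ ▸ (Bool.ne_false_iff.mp hv)

lemma Xcount_eq (r : ℕ) (η : LocalConfig d ρ p r) (σ : Conf d n) :
    (Xcount d ρ p r n η σ : ℝ) =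
      ∑ x : Vtx d n, (if occursAt d ρ p r n η x σ then (1:ℝ) else 0) := by
  classical
  unfold Xcount
  rw [Set.ncard_eq_toFinset_card', Set.toFinset_setOf, Finset.card_filter]
  push_cast
  exact Finset.sum_congr rfl (fun x _ => by split <;> simp

)

lemma expect_eq (a b : ℝ) (f : Conf d n → ℝ) :
    expect d ρ p n a b f =
      (∑ σ : Conf d n, weight d ρ p n a b σ * f σ) / partZ d ρ p n a b := by
  unfold expect
  rw [tsum_fintype]

lemma partZ_pos (a b : ℝ) : 0 < partZ d ρ p n a b := by
  rw [partZ_eq]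
  exact Finset.sum_pos (fun σ _ => Real.exp_pos _) Finset.univ_nonempty

lemma Xcount_mono {r : ℕ} (η : LocalConfig d ρ p r) (σ : Conf d n) :
    (Xcount d ρ p (r+1) n (ringExt d ρ p r η) σ : ℝ) ≤ (Xcount d ρ p r n η σ : ℝ) := by
  have : Xcount d ρ p (r+1) n (ringExt d ρ p r η) σ ≤ Xcount d ρ p r n η σ := by
    unfold Xcount
    exact Set.ncard_le_ncard (fun x hx => occursAt_ringExt η x σ hx) (Set.toFinite _)
  exact_mod_cast this

lemma main_bound {r : ℕ} (η : LocalConfig d ρ p r) (a b : ℝ) (hn : 2*(ρ*(r+1)) < n) :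
    |expect d ρ p n a b (fun σ => (Xcount d ρ p (r + 1) n (ringExt d ρ p r η) σ : ℝ))
      - expect d ρ p n a b (fun σ => (Xcount d ρ p r n η σ : ℝ))|
    ≤ (n:ℝ)^d *
      ((((refBall_finite (d := d) (ρ := ρ) (p := p) (r+1)).toFinset \
        (refBall_finite (d := d) (ρ := ρ) (p := p) r).toFinset).card : ℝ)) *
      Real.exp (2*a*(kOf d ρ p r η + 1) +
        2 * |b| * ((2*ρ+1)^d * (kOf d ρ p r η + 1))) := by
  classical
  set Z := partZ d ρ p n a b with hZdef
  have hZ : 0 < Z := partZ_pos a b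
  set Ring : Finset (Fin d → ℤ) := (refBall_finite (d := d) (ρ := ρ) (p := p) (r+1)).toFinset \
    (refBall_finite (d := d) (ρ := ρ) (p := p) r).toFinset with hRing
  set lam : ℝ := Real.exp (2*a*(kOf d ρ p r η + 1) +
    2 * |b| * ((2*ρ+1)^d * (kOf d ρ p r η + 1))) with hlam
  set Xb : Conf d n → ℝ := fun σ => (Xcount d ρ p (r + 1) n (ringExt d ρ p r η) σ : ℝ)
    with hXb
  set Xs : Conf d n → ℝ := fun σ => (Xcount d ρ p r n η σ : ℝ) with hXs
  set W : Conf d n → ℝ := weight d ρ p n a b with hW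
  have key : ∑ σ : Conf d n, W σ * (Xs σ - Xb σ) ≤ (n:ℝ)^d * Ring.card * lam * Z := by
    have hpt : ∀ σ : Conf d n, Xs σ - Xb σ ≤
        ∑ x : Vtx d n, ∑ w ∈ Ring,
          (if (occursAt d ρ p r n η x σ ∧ σ (x + fun i => ((w i : ZMod n))) = true)
            then (1:ℝ) else 0) := by
      intro σ
      rw [hXs, hXb]
      simp only []
      rw [Xcount_eq, Xcount_eq, ← Finset.sum_sub_distrib]
      refine Finset.sum_le_sum (fun x _ => ?_)
      by_cases h1 : occursAt d ρ p r n η x σ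
      · by_cases h2 : occursAt d ρ p (r+1) n (ringExt d ρ p r η) x σ
        · simp only [if_pos h1, if_pos h2, sub_self]
          positivity
        · obtain ⟨w, hw, hwt⟩ := exists_ring_pos η x σ h1 h2
          have hwR : w ∈ Ring := by
            rw [hRing, Finset.mem_sdiff, Set.Finite.mem_toFinset, Set.Finite.mem_toFinset]
            exact hw
          calc (if occursAt d ρ p r n η x σ then (1:ℝ) else 0) -
              (if occursAt d ρ p (r+1) n (ringExt d ρ p r η) x σ then (1:ℝ) else 0)
              = 1 := by rw [if_pos h1, if_neg h2]; ring
            _ ≤ _ := by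
              refine Finset.single_le_sum (f := fun w => (if (occursAt d ρ p r n η x σ ∧
                σ (x + fun i => ((w i : ZMod n))) = true) then (1:ℝ) else 0))
                (fun w _ => by positivity) hwR |>.trans_eq' ?_
              rw [if_pos ⟨h1, hwt⟩]
      · have h2 : ¬ occursAt d ρ p (r+1) n (ringExt d ρ p r η) x σ :=
          fun h => h1 (occursAt_ringExt η x σ h)
        simp only [if_neg h1, if_neg h2, sub_self]
        positivity
    calc ∑ σ : Conf d n, W σ * (Xs σ - Xb σ)
        ≤ ∑ σ : Conf d n, W σ * (∑ x : Vtx d n, ∑ w ∈ Ring,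
            (if (occursAt d ρ p r n η x σ ∧ σ (x + fun i => ((w i : ZMod n))) = true)
              then (1:ℝ) else 0)) := by
          refine Finset.sum_le_sum (fun σ _ => ?_)
          exact mul_le_mul_of_nonneg_left (hpt σ) (weight_nonneg a b σ)
      _ = ∑ x : Vtx d n, ∑ w ∈ Ring, ∑ σ : Conf d n,
            (if (occursAt d ρ p r n η x σ ∧ σ (x + fun i => ((w i : ZMod n))) = true)
              then W σ else 0) := by
          have hexp : ∀ σ : Conf d n, W σ * (∑ x : Vtx d n, ∑ w ∈ Ring,
              (if (occursAt d ρ p r n η x σ ∧ σ (x + fun i => ((w i : ZMod n))) = true)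
                then (1:ℝ) else 0)) = ∑ x : Vtx d n, ∑ w ∈ Ring,
              (if (occursAt d ρ p r n η x σ ∧ σ (x + fun i => ((w i : ZMod n))) = true)
                then W σ else 0) := by
            intro σ
            rw [Finset.mul_sum]
            refine Finset.sum_congr rfl (fun x _ => ?_)
            rw [Finset.mul_sum]
            refine Finset.sum_congr rfl (fun w _ => ?_)
            rw [mul_ite, mul_one, mul_zero]
          rw [Finset.sum_congr rfl (fun σ _ => hexp σ), Finset.sum_comm]
          exact Finset.sum_congr rfl (fun x _ => Finset.sum_comm)
      _ ≤ ∑ _x : Vtx d n, ∑ _w ∈ Ring, lam * Z := by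
          refine Finset.sum_le_sum (fun x _ => Finset.sum_le_sum (fun w hw => ?_))
          rw [hRing, Finset.mem_sdiff, Set.Finite.mem_toFinset, Set.Finite.mem_toFinset] at hw
          exact event_weight_bound η a b hn x hw.1 hw.2
      _ = (n:ℝ)^d * Ring.card * lam * Z := by
          rw [Finset.sum_const, Finset.sum_const, Finset.card_univ]
          have hcard : Fintype.card (Vtx d n) = n^d := by
            rw [Fintype.card_fun, ZMod.card, Fintype.card_fin]
          rw [hcard, nsmul_eq_mul, nsmul_eq_mul]
          push_cast
          ring
  have hsub : ∀ σ : Conf d n, 0 ≤ W σ * (Xs σ - Xb σ) := fun σ =>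
    mul_nonneg (weight_nonneg a b σ) (sub_nonneg.mpr (Xcount_mono η σ))
  have hdiff : expect d ρ p n a b Xb - expect d ρ p n a b Xs
      = -((∑ σ : Conf d n, W σ * (Xs σ - Xb σ)) / Z) := by
    rw [expect_eq, expect_eq, div_sub_div_same, ← hZdef, ← hW]
    rw [← neg_div]
    congr 1
    rw [← Finset.sum_sub_distrib, ← Finset.sum_neg_distrib]
    exact Finset.sum_congr rfl (fun σ _ => by ring)
  rw [hdiff, abs_neg, abs_div, abs_of_pos hZ,
    abs_of_nonneg (Finset.sum_nonneg (fun σ _ => hsub σ))]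
  rw [div_le_iff₀ hZ]
  calc ∑ σ : Conf d n, W σ * (Xs σ - Xb σ) ≤ (n:ℝ)^d * Ring.card * lam * Z := key
    _ = (n:ℝ)^d * Ring.card * lam * Z := rfl

end C4
/-- **Lemma (reduction to clean configurations, expectation part).**
If `e^{2a(n)} = c n^{-d/k(η)}` then `|E_{a(n),b}[X_n(η̊)] - E_{a(n),b}[X_n(η)]| → 0`. -/
theorem stmt_5
    (d ρ r : ℕ) (hd : 1 ≤ d) (hρ : 1 ≤ ρ) (p : ℝ≥0∞) [Fact (1 ≤ p)]
    (η : LocalConfig d ρ p r) (hk : 1 ≤ kOf d ρ p r η)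
    (c : ℝ) (hc : 0 < c) (b : ℝ) (a : ℕ → ℝ)
    (ha : ∀ n : ℕ, 0 < n →
      Real.exp (2 * a n) = c * (n : ℝ) ^ (-(d : ℝ) / (kOf d ρ p r η : ℝ))) :
    Filter.Tendsto
      (fun n : ℕ =>
        |expect d ρ p n (a n) b (fun σ => (Xcount d ρ p (r + 1) n (ringExt d ρ p r η) σ : ℝ))
          - expect d ρ p n (a n) b (fun σ => (Xcount d ρ p r n η σ : ℝ))|)
      Filter.atTop (nhds 0) := by
  classical
  set k := kOf d ρ p r η with hkdef
  have hk0 : 0 < (k:ℝ) := by exact_mod_cast hk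
  have hd0 : 0 < (d:ℝ) := by exact_mod_cast hd
  set q : ℝ := (d:ℝ)/(k:ℝ) with hq
  have hq0 : 0 < q := div_pos hd0 hk0
  set K : ℝ := Real.exp (2 * |b| * ((2*(ρ:ℝ)+1)^d * ((k:ℝ)+1))) with hK
  set R : ℝ := (((refBall_finite (d := d) (ρ := ρ) (p := p) (r+1)).toFinset \
      (refBall_finite (d := d) (ρ := ρ) (p := p) r).toFinset).card : ℝ) with hR
  set C : ℝ := R * K * c^(k+1) with hC
  have hbound : ∀ᶠ n : ℕ in Filter.atTop,
      |expect d ρ p n (a n) b (fun σ => (Xcount d ρ p (r + 1) n (ringExt d ρ p r η) σ : ℝ))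
        - expect d ρ p n (a n) b (fun σ => (Xcount d ρ p r n η σ : ℝ))|
        ≤ C * (n:ℝ) ^ (-q) := by
    filter_upwards [Filter.eventually_ge_atTop (2*(ρ*(r+1)) + 1)] with n hn
    have hn0 : 0 < n := by omega
    haveI : NeZero n := ⟨by omega⟩
    have hn' : 2*(ρ*(r+1)) < n := by omega
    have hb := main_bound (n := n) η (a n) b hn'
    have hnpos : (0:ℝ) < (n:ℝ) := by exact_mod_cast hn0
    have hexp : Real.exp (2*(a n)*((k:ℝ) + 1) + 2 * |b| * ((2*(ρ:ℝ)+1)^d * ((k:ℝ) + 1)))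
        = (c * (n:ℝ) ^ (-q)) ^ (k+1) * K := by
      rw [Real.exp_add, hK]
      congr 1
      rw [show 2*(a n)*((k:ℝ)+1) = ((k+1 : ℕ):ℝ) * (2 * a n) by push_cast; ring]
      rw [Real.exp_nat_mul, ha n hn0]
      rw [hq, neg_div]
    calc |expect d ρ p n (a n) b
            (fun σ => (Xcount d ρ p (r + 1) n (ringExt d ρ p r η) σ : ℝ))
          - expect d ρ p n (a n) b (fun σ => (Xcount d ρ p r n η σ : ℝ))|
        ≤ (n:ℝ)^d * R * ((c * (n:ℝ)^(-q))^(k+1) * K) := by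
          rw [← hexp]
          exact hb
      _ = C * (n:ℝ)^(-q) := by
          have hqk : q * (k:ℝ) = (d:ℝ) := div_mul_cancel₀ _ hk0.ne'
          have h2 : ((c * (n:ℝ)^(-q))^(k+1) : ℝ)
              = c^(k+1) * (n:ℝ)^(-q*((k:ℝ)+1)) := by
            rw [mul_pow]
            congr 1
            rw [← Real.rpow_natCast ((n:ℝ)^(-q)) (k+1), ← Real.rpow_mul hnpos.le]
            congr 1
            push_cast
            ring
          have h3 : ((n:ℝ)^d : ℝ) = (n:ℝ)^((d:ℕ):ℝ) := (Real.rpow_natCast _ d).symm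
          rw [h2, h3, hC]
          rw [show (n:ℝ)^((d:ℕ):ℝ) * R * (c^(k+1) * (n:ℝ)^(-q*((k:ℝ)+1)) * K)
            = (R * K * c^(k+1)) * ((n:ℝ)^((d:ℕ):ℝ) * (n:ℝ)^(-q*((k:ℝ)+1))) by ring]
          congr 1
          rw [← Real.rpow_add hnpos]
          congr 1
          have h4 : q * ((k:ℝ)+1) = (d:ℝ) + q := by rw [mul_add, mul_one, hqk]
          linarith
  refine squeeze_zero' (Filter.Eventually.of_forall (fun n => abs_nonneg _)) hbound ?_
  have h1 : Filter.Tendsto (fun n : ℕ => (n:ℝ) ^ (-q)) Filter.atTop (nhds 0) :=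
    (tendsto_rpow_neg_atTop hq0).comp tendsto_natCast_atTop_atTop
  simpa using h1.const_mul C

end

end Ising
end

section
/- Fix integers l ≥ 1 and r ≥ 1. There exists a constant C > 0 (depending only on l, r, d, ρ, p) such that for every s = 1,…,l and every admissible size n, the cardinality of C_l(s) satisfies |C_l(s)| ≤ C n^{ds}. -/
open scoped ENNReal BigOperators
open Filter

namespace Ising

noncomputable section

/-! ### Auxiliary machinery for the proof of `stmt_10` -/

lemma abs_le_lpNorm (p : ℝ≥0∞) [Fact (1 ≤ p)] {d : ℕ} (z : Fin d → ℤ) (k : Fin d) :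
    |(z k : ℝ)| ≤ lpNorm p z := by
  have h1 : (1 : ℝ≥0∞) ≤ p := Fact.out
  set f : PiLp p (fun _ : Fin d => ℝ) :=
    (WithLp.equiv p (Fin d → ℝ)).symm (fun i => (z i : ℝ)) with hf
  have hfk : f k = (z k : ℝ) := rfl
  have hmain : ‖f k‖ ≤ ‖f‖ := by
    by_cases hp : p = ∞
    · subst hp
      rw [PiLp.norm_eq_ciSup]
      exact le_ciSup (f := fun i => ‖f i‖) (Set.Finite.bddAbove (Set.finite_range _)) k
    · have hpr : 0 < p.toReal :=
        ENNReal.toReal_pos (zero_lt_one.trans_le h1).ne' hp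
      rw [PiLp.norm_eq_sum hpr]
      have h2 : ‖f k‖ ^ p.toReal ≤ ∑ i, ‖f i‖ ^ p.toReal :=
        Finset.single_le_sum (fun i _ => Real.rpow_nonneg (norm_nonneg _) _)
          (Finset.mem_univ k)
      calc ‖f k‖ = (‖f k‖ ^ p.toReal) ^ (1 / p.toReal) := by
            rw [one_div, Real.rpow_rpow_inv (norm_nonneg _) hpr.ne']
        _ ≤ (∑ i, ‖f i‖ ^ p.toReal) ^ (1 / p.toReal) :=
            Real.rpow_le_rpow (Real.rpow_nonneg (norm_nonneg _) _) h2 (by positivity)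
  have : ‖(z k : ℝ)‖ ≤ ‖f‖ := by rw [← hfk]; exact hmain
  simpa [lpNorm, Real.norm_eq_abs, hf] using this

lemma adj_rep {d ρ n : ℕ} {p : ℝ≥0∞} [Fact (1 ≤ p)] {u v : Vtx d n}
    (h : (torus d ρ p n).Adj u v) :
    ∃ z : Fin d → ℤ, (∀ i, ((z i : ZMod n) = v i - u i)) ∧ ∀ i, |z i| ≤ (ρ : ℤ) := by
  obtain ⟨-, z, hz, hn⟩ : u ≠ v ∧ ∃ z : Fin d → ℤ,
      (∀ i, ((z i : ZMod n) = v i - u i)) ∧ lpNorm p z ≤ (ρ : ℝ) := h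
  refine ⟨z, hz, fun i => ?_⟩
  have h1 : |(z i : ℝ)| ≤ (ρ : ℝ) := (abs_le_lpNorm p z i).trans hn
  rw [← Int.cast_abs] at h1
  exact_mod_cast h1

lemma walk_rep {d ρ n : ℕ} {p : ℝ≥0∞} [Fact (1 ≤ p)] {u v : Vtx d n}
    (w : (torus d ρ p n).Walk u v) :
    ∃ z : Fin d → ℤ, (∀ i, ((z i : ZMod n) = v i - u i)) ∧
      ∀ i, |z i| ≤ (w.length : ℤ) * ρ := by
  induction w with
  | nil => exact ⟨0, fun i => by simp, fun i => by simp⟩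
  | @cons a b c h q ih =>
      obtain ⟨z1, hz1, hb1⟩ := adj_rep h
      obtain ⟨z2, hz2, hb2⟩ := ih
      refine ⟨z1 + z2, fun i => ?_, fun i => ?_⟩
      · have : ((z1 i + z2 i : ℤ) : ZMod n) = (z1 i : ZMod n) + (z2 i : ZMod n) := by
          push_cast; ring
        simp only [Pi.add_apply, this, hz1 i, hz2 i]; ring
      · have habs : |z1 i + z2 i| ≤ (ρ : ℤ) + (q.length : ℤ) * ρ :=
          le_trans (abs_add_le _ _) (add_le_add (hb1 i) (hb2 i))
        have hlen : ((SimpleGraph.Walk.cons h q).length : ℤ) * ρ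
            = (ρ : ℤ) + (q.length : ℤ) * ρ := by
          rw [SimpleGraph.Walk.length_cons]; push_cast; ring
        simpa only [Pi.add_apply, hlen] using habs

lemma tball_rep {d ρ n : ℕ} {p : ℝ≥0∞} [Fact (1 ≤ p)] {x y : Vtx d n} {R : ℕ}
    (h : y ∈ tball d ρ p n x R) :
    ∃ z : Fin d → ℤ, (∀ i, ((z i : ZMod n) = y i - x i)) ∧
      ∀ i, |z i| ≤ (R : ℤ) * ρ := by
  obtain ⟨hreach, hdist⟩ := h
  obtain ⟨w, hw⟩ := hreach.exists_walk_length_eq_dist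
  obtain ⟨z, hz, hb⟩ := walk_rep w
  refine ⟨z, hz, fun i => (hb i).trans ?_⟩
  have hlen : (w.length : ℤ) ≤ (R : ℤ) := by
    have : w.length ≤ R := by rw [hw]; exact hdist
    exact_mod_cast this
  exact mul_le_mul_of_nonneg_right hlen (by positivity)

lemma cball_rep {d ρ n : ℕ} {p : ℝ≥0∞} [Fact (1 ≤ p)] {x y : Vtx d n} {R : ℕ}
    (h : y ∈ cball d ρ p n x R) :
    ∃ z : Fin d → ℤ, (∀ i, ((z i : ZMod n) = y i - x i)) ∧
      ∀ i, |z i| ≤ ((R : ℤ) + 1) * ρ := by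
  rcases h with h | ⟨-, w, hw, hadj⟩
  · obtain ⟨z, hz, hb⟩ := tball_rep h
    refine ⟨z, hz, fun i => (hb i).trans ?_⟩
    have : (0 : ℤ) ≤ (ρ : ℤ) := by positivity
    nlinarith
  · obtain ⟨z1, hz1, hb1⟩ := tball_rep hw
    obtain ⟨z2, hz2, hb2⟩ := adj_rep hadj
    refine ⟨z1 + z2, fun i => ?_, fun i => ?_⟩
    · have : ((z1 i + z2 i : ℤ) : ZMod n) = (z1 i : ZMod n) + (z2 i : ZMod n) := by
        push_cast; ring
      simp only [Pi.add_apply, this, hz1 i, hz2 i]; ring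
    · have habs : |z1 i + z2 i| ≤ (R : ℤ) * ρ + ρ :=
        le_trans (abs_add_le _ _) (add_le_add (hb1 i) (hb2 i))
      have : ((R : ℤ) + 1) * ρ = (R : ℤ) * ρ + ρ := by ring
      simpa only [Pi.add_apply, this] using habs

lemma step_rep {d ρ n r : ℕ} {p : ℝ≥0∞} [Fact (1 ≤ p)] {l : ℕ} {x : Fin l → Vtx d n}
    {a b : Fin l} (h : stepRel d ρ p n r x a b) :
    ∃ z : Fin d → ℤ, (∀ i, ((z i : ZMod n) = x b i - x a i)) ∧
      ∀ i, |z i| ≤ (2 * (r : ℤ) + 1) * ρ := by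
  obtain ⟨y, hy1, hy2⟩ := h
  obtain ⟨z1, hz1, hb1⟩ := cball_rep hy1
  obtain ⟨z2, hz2, hb2⟩ := tball_rep hy2
  refine ⟨z1 - z2, fun i => ?_, fun i => ?_⟩
  · have : ((z1 i - z2 i : ℤ) : ZMod n) = (z1 i : ZMod n) - (z2 i : ZMod n) := by
      push_cast; ring
    simp only [Pi.sub_apply, this, hz1 i, hz2 i]; ring
  · have habs : |z1 i - z2 i| ≤ ((r : ℤ) + 1) * ρ + (r : ℤ) * ρ :=
      le_trans (abs_sub _ _) (add_le_add (hb1 i) (hb2 i))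
    have : (2 * (r : ℤ) + 1) * ρ = ((r : ℤ) + 1) * ρ + (r : ℤ) * ρ := by ring
    simpa only [Pi.sub_apply, this] using habs

/-- The set of admissible "offsets": vertices of the torus having an integer representative
with all coordinates bounded by `(2r+1)ρ`. -/
def Dset (d ρ r n : ℕ) : Set (Vtx d n) :=
  {v | ∃ z : Fin d → ℤ, (∀ i, ((z i : ZMod n) = v i)) ∧
    ∀ i, |z i| ≤ (2 * (r : ℤ) + 1) * ρ}

lemma zero_mem_Dset (d ρ r n : ℕ) : (0 : Vtx d n) ∈ Dset d ρ r n :=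
  ⟨0, fun i => by simp, fun i => by simp⟩

lemma neg_mem_Dset {d ρ r n : ℕ} {v : Vtx d n} (h : v ∈ Dset d ρ r n) :
    -v ∈ Dset d ρ r n := by
  obtain ⟨z, hz, hb⟩ := h
  exact ⟨-z, fun i => by simp [hz i], fun i => by simpa using hb i⟩

lemma step_mem_Dset {d ρ n r : ℕ} {p : ℝ≥0∞} [Fact (1 ≤ p)] {l : ℕ} {x : Fin l → Vtx d n}
    {a b : Fin l} (h : stepRel d ρ p n r x a b) : x b - x a ∈ Dset d ρ r n := by
  obtain ⟨z, hz, hb⟩ := step_rep h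
  exact ⟨z, fun i => by rw [hz i, Pi.sub_apply], hb⟩

/-- The box of integer vectors with coordinates bounded by `(2r+1)ρ`. -/
def Kbox (d ρ r : ℕ) : Finset (Fin d → ℤ) :=
  Fintype.piFinset fun _ => Finset.Icc (-((2 * (r : ℤ) + 1) * ρ)) ((2 * (r : ℤ) + 1) * ρ)

lemma Kbox_card_pos (d ρ r : ℕ) : 0 < (Kbox d ρ r).card := by
  refine Finset.card_pos.mpr ⟨0, ?_⟩
  simp only [Kbox, Fintype.mem_piFinset, Finset.mem_Icc, Pi.zero_apply]
  intro i
  constructor <;> [skip; positivity]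
  simp only [neg_nonpos]
  positivity

lemma ncard_Dset_le (d ρ r n : ℕ) : (Dset d ρ r n).ncard ≤ (Kbox d ρ r).card := by
  classical
  have hsub : Dset d ρ r n ⊆
      (fun z : Fin d → ℤ => fun i => ((z i : ZMod n))) '' ↑(Kbox d ρ r) := by
    rintro v ⟨z, hz, hb⟩
    refine ⟨z, ?_, funext hz⟩
    simp only [Finset.coe_mem, Finset.mem_coe, Kbox, Fintype.mem_piFinset, Finset.mem_Icc]
    intro i
    exact abs_le.mp (hb i)
  calc (Dset d ρ r n).ncard
      ≤ ((fun z : Fin d → ℤ => fun i => ((z i : ZMod n))) '' ↑(Kbox d ρ r)).ncard :=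
        Set.ncard_le_ncard hsub ((Kbox d ρ r).finite_toSet.image _)
    _ ≤ (↑(Kbox d ρ r) : Set (Fin d → ℤ)).ncard :=
        Set.ncard_image_le (Kbox d ρ r).finite_toSet
    _ = (Kbox d ρ r).card := Set.ncard_coe_finset _

/-- Chains of length `m` for the symmetrized one-step relation. -/
def chainP {α : Type*} (R : α → α → Prop) : ℕ → α → α → Prop
  | 0, i, j => i = j
  | (m + 1), i, j => ∃ k, chainP R m i k ∧ (R k j ∨ R j k)

lemma chainP_concat {α : Type*} {R : α → α → Prop} :
    ∀ {m' m : ℕ} {i j k : α}, chainP R m i j → chainP R m' j k → chainP R (m + m') i k := by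
  intro m'
  induction m' with
  | zero =>
      intro m i j k h1 h2
      have : j = k := h2
      exact this ▸ h1
  | succ m' ih =>
      intro m i j k h1 h2
      obtain ⟨k', hk', hS⟩ := h2
      exact ⟨k', ih h1 hk', hS⟩

lemma chainP_symm {α : Type*} {R : α → α → Prop} :
    ∀ {m : ℕ} {i j : α}, chainP R m i j → chainP R m j i := by
  intro m
  induction m with
  | zero => intro i j h; exact (h : i = j).symm
  | succ m ih =>
      intro i j h
      obtain ⟨k, hk, hS⟩ := h
      have h1 : chainP R 1 j k := ⟨j, rfl, hS.symm⟩
      have := chainP_concat h1 (ih hk)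
      rwa [Nat.add_comm] at this

lemma eqvGen_iff_chain {α : Type*} (R : α → α → Prop) {i j : α} :
    Relation.EqvGen R i j ↔ ∃ m, chainP R m i j := by
  constructor
  · intro h
    induction h with
    | rel a b h => exact ⟨1, a, rfl, Or.inl h⟩
    | refl a => exact ⟨0, rfl⟩
    | symm a b _ ih => obtain ⟨m, hm⟩ := ih; exact ⟨m, chainP_symm hm⟩
    | trans a b c _ _ ih1 ih2 =>
        obtain ⟨m1, h1⟩ := ih1; obtain ⟨m2, h2⟩ := ih2
        exact ⟨m1 + m2, chainP_concat h1 h2⟩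
  · rintro ⟨m, hm⟩
    induction m generalizing j with
    | zero => exact (hm : i = j) ▸ Relation.EqvGen.refl i
    | succ m ih =>
        obtain ⟨k, hk, hS⟩ := hm
        refine Relation.EqvGen.trans _ _ _ (ih hk) ?_
        rcases hS with h | h
        · exact Relation.EqvGen.rel _ _ h
        · exact Relation.EqvGen.symm _ _ (Relation.EqvGen.rel _ _ h)

open Classical in
/-- From a tuple whose balls form at most `s` connectivity classes, construct a rooted-forest
map `f` on indices: each non-fixed index is linked to its image by a one-step relation,
iterating `f` `l` times reaches a fixed point, and there are at most `s` fixed points. -/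
lemma exists_good_map {l : ℕ} (R : Fin l → Fin l → Prop) {s : ℕ}
    (hs : (Set.range fun i => {j | Relation.EqvGen R i j}).ncard = s) :
    ∃ f : Fin l → Fin l,
      (∀ i, f i = i ∨ (R (f i) i ∨ R i (f i))) ∧
      (∀ i, f (f^[l] i) = f^[l] i) ∧
      {i : Fin l | f i = i}.ncard ≤ s := by
  classical
  set cls : Fin l → Finset (Fin l) :=
    fun i => Finset.univ.filter (fun j => Relation.EqvGen R i j) with hcls
  have hmem : ∀ i, i ∈ cls i := fun i => by
    simp [hcls, Relation.EqvGen.refl]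
  set root : Fin l → Fin l := fun i => (cls i).min' ⟨i, hmem i⟩ with hrootdef
  have hcls_eq : ∀ i j, Relation.EqvGen R i j → cls i = cls j := by
    intro i j h
    ext k
    simp only [hcls, Finset.mem_filter, Finset.mem_univ, true_and]
    constructor
    · intro hk; exact Relation.EqvGen.trans _ _ _ (Relation.EqvGen.symm _ _ h) hk
    · intro hk; exact Relation.EqvGen.trans _ _ _ h hk
  have hroot_eq : ∀ i j, Relation.EqvGen R i j → root i = root j := by
    intro i j h
    simp only [hrootdef]
    congr 1
    exact hcls_eq i j h
  have hroot_mem : ∀ i, Relation.EqvGen R i (root i) := by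
    intro i
    have := (cls i).min'_mem ⟨i, hmem i⟩
    simpa [hcls] using this
  have hex : ∀ i, ∃ m, chainP R m (root i) i := fun i =>
    (eqvGen_iff_chain R).1 (Relation.EqvGen.symm _ _ (hroot_mem i))
  set dist : Fin l → ℕ := fun i => Nat.find (hex i) with hdistdef
  have hdist_spec : ∀ i, chainP R (dist i) (root i) i := fun i => Nat.find_spec (hex i)
  have hdist_min : ∀ i m, chainP R m (root i) i → dist i ≤ m := fun i m h => Nat.find_le h
  have hd0 : ∀ i, i ≠ root i → dist i ≠ 0 := by
    intro i hi h0
    have := hdist_spec i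
    rw [h0] at this
    exact hi (this : root i = i).symm
  have step_ex : ∀ i, i ≠ root i →
      ∃ k, chainP R (dist i - 1) (root i) k ∧ (R k i ∨ R i k) := by
    intro i hi
    obtain ⟨m, hm⟩ := Nat.exists_eq_succ_of_ne_zero (hd0 i hi)
    have hspec := hdist_spec i
    rw [hm] at hspec
    obtain ⟨k, hk, hS⟩ := hspec
    exact ⟨k, by rw [hm]; simpa using hk, hS⟩
  set f : Fin l → Fin l :=
    fun i => if h : i = root i then i else Classical.choose (step_ex i h) with hfdef
  have hfi : ∀ i (h : ¬ i = root i), f i = Classical.choose (step_ex i h) :=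
    fun i h => dif_neg h
  have hfix_iff : ∀ i, f i = i ↔ i = root i := by
    intro i
    constructor
    · intro hfix
      by_contra h
      have spec := Classical.choose_spec (step_ex i h)
      rw [hfi i h] at hfix
      rw [hfix] at spec
      have h1 : dist i ≤ dist i - 1 := hdist_min i _ spec.1
      have h2 := hd0 i h
      omega
    · intro h; exact dif_pos h
  have hdec : ∀ i, f i ≠ i → dist (f i) < dist i := by
    intro i hne
    have h : ¬ i = root i := fun hh => hne ((hfix_iff i).2 hh)
    have spec := Classical.choose_spec (step_ex i h)
    have hroot_k : root (Classical.choose (step_ex i h)) = root i := by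
      have h1 : Relation.EqvGen R (root i) (Classical.choose (step_ex i h)) :=
        (eqvGen_iff_chain R).2 ⟨_, spec.1⟩
      have h2 : Relation.EqvGen R i (Classical.choose (step_ex i h)) :=
        Relation.EqvGen.trans _ _ _ (hroot_mem i) h1
      exact (hroot_eq i _ h2).symm
    have hle : dist (Classical.choose (step_ex i h)) ≤ dist i - 1 :=
      hdist_min _ _ (by rw [hroot_k]; exact spec.1)
    have h2 := hd0 i h
    rw [hfi i h]
    omega
  refine ⟨f, ?_, ?_, ?_⟩
  · intro i
    by_cases h : i = root i
    · left; exact dif_pos h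
    · right
      have spec := Classical.choose_spec (step_ex i h)
      rw [hfi i h]
      exact spec.2
  · intro i
    by_contra hne
    have hnot : ∀ t, t ≤ l → f (f^[t] i) ≠ f^[t] i := by
      intro t ht hfixt
      apply hne
      have h1 : f^[l] i = f^[t] i := by
        have h2 : f^[l] i = f^[l - t] (f^[t] i) := by
          rw [← Function.iterate_add_apply, Nat.sub_add_cancel ht]
        rw [h2, Function.iterate_fixed hfixt]
      rw [h1]; exact hfixt
    have hstrict : ∀ t, t < l → dist (f^[t + 1] i) < dist (f^[t] i) := by
      intro t ht
      have := hdec (f^[t] i) (hnot t (le_of_lt ht))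
      rwa [Function.iterate_succ_apply']
    have hmono : ∀ t1 t2, t1 < t2 → t2 ≤ l → dist (f^[t2] i) < dist (f^[t1] i) := by
      intro t1 t2 h12 h2l
      induction t2 with
      | zero => omega
      | succ t ih =>
          rcases Nat.lt_or_ge t1 t with h | h
          · exact lt_trans (hstrict t (by omega)) (ih h (by omega))
          · have : t1 = t := by omega
            subst this
            exact hstrict t1 (by omega)
    have hinj : Function.Injective (fun t : Fin (l + 1) => f^[t.1] i) := by
      intro a b hab
      have hab' : f^[a.1] i = f^[b.1] i := hab
      by_contra hne'
      rcases lt_trichotomy a.1 b.1 with h | h | h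
      · have := hmono a.1 b.1 h (Nat.lt_succ_iff.mp b.2)
        rw [hab'] at this; omega
      · exact hne' (Fin.ext h)
      · have := hmono b.1 a.1 h (Nat.lt_succ_iff.mp a.2)
        rw [hab'] at this; omega
    have := Fintype.card_le_of_injective _ hinj
    simp only [Fintype.card_fin] at this
    omega
  · rw [← hs]
    refine Set.ncard_le_ncard_of_injOn (fun i => {j | Relation.EqvGen R i j})
      (fun a _ => Set.mem_range_self a) ?_ (Set.toFinite _)
    intro a ha b hb hab
    have hab' : {j | Relation.EqvGen R a j} = {j | Relation.EqvGen R b j} := hab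
    have h1 : Relation.EqvGen R a b := by
      have : b ∈ {j | Relation.EqvGen R b j} := Relation.EqvGen.refl b
      rw [← hab'] at this
      exact this
    calc a = root a := (hfix_iff a).1 ha
      _ = root b := hroot_eq a b h1
      _ = b := ((hfix_iff b).1 hb).symm

lemma ncard_iUnion_le_sum {α ι : Type*} [Fintype ι] (t : ι → Set α)
    (ht : ∀ i, (t i).Finite) :
    (⋃ i, t i).ncard ≤ ∑ i, (t i).ncard := by
  classical
  have key : ∀ F : Finset ι, (⋃ i ∈ F, t i).ncard ≤ ∑ i ∈ F, (t i).ncard := by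
    intro F
    induction F using Finset.induction with
    | empty => simp
    | @insert a F ha ih =>
        rw [Finset.set_biUnion_insert, Finset.sum_insert ha]
        refine le_trans (Set.ncard_union_le _ _) ?_
        exact Nat.add_le_add_left ih _
  have := key Finset.univ
  simpa using this

/-- **Lemma (cardinality of `C_l(s)`, upper bound).**  There is a constant `C > 0` such that
`|C_l(s)| ≤ C n^{ds}` for every `s = 1, …, l` and every admissible `n`. -/
theorem stmt_10
    (d ρ r l : ℕ) (hd : 1 ≤ d) (hρ : 1 ≤ ρ) (hr : 1 ≤ r) (hl : 1 ≤ l)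
    (p : ℝ≥0∞) [Fact (1 ≤ p)] :
    ∃ C : ℝ, 0 < C ∧ ∀ s : ℕ, 1 ≤ s → s ≤ l → ∀ n : ℕ, 2 * ρ * l * (2 * r + 1) < n →
      (Set.ncard (tupleClass d ρ p n r l s) : ℝ) ≤ C * (n : ℝ) ^ (d * s) := by
  classical
  set K : ℕ := (Kbox d ρ r).card with hKdef
  have hK1 : 1 ≤ K := Kbox_card_pos d ρ r
  have hC : 0 < (l ^ l * K ^ l : ℕ) :=
    Nat.mul_pos (Nat.pow_pos (by omega)) (Nat.pow_pos (by omega))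
  refine ⟨(l ^ l * K ^ l : ℕ), by exact_mod_cast hC, ?_⟩
  intro s hs1 hsl n hn
  have hn0 : 0 < n := lt_of_le_of_lt (Nat.zero_le _) hn
  haveI : NeZero n := ⟨hn0.ne'⟩
  -- the family of sets indexed by forest maps
  set Ffam : (Fin l → Fin l) → Set (Fin l → Vtx d n) := fun f =>
    {x | (∀ i, f (f^[l] i) = f^[l] i) ∧ {i : Fin l | f i = i}.ncard ≤ s ∧
      ∀ i, x i - x (f i) ∈ Dset d ρ r n} with hFdef
  -- covering
  have hcover : tupleClass d ρ p n r l s ⊆ ⋃ f : Fin l → Fin l, Ffam f := by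
    intro x hx
    obtain ⟨f, hA, hB, hC'⟩ := exists_good_map (stepRel d ρ p n r x) hx
    refine Set.mem_iUnion.2 ⟨f, hB, hC', fun i => ?_⟩
    rcases hA i with h | h | h
    · rw [h, sub_self]; exact zero_mem_Dset d ρ r n
    · exact step_mem_Dset h
    · have := neg_mem_Dset (step_mem_Dset h)
      rwa [neg_sub] at this
  -- cardinality of each piece
  have hFcard : ∀ f : Fin l → Fin l, (Ffam f).ncard ≤ n ^ (d * s) * K ^ l := by
    intro f
    rcases Set.eq_empty_or_nonempty (Ffam f) with he | ⟨x0, hx0⟩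
    · simp [he]
    obtain ⟨hfix, hcard, -⟩ := hx0
    have hzero : (0 : Vtx d n) ∈ Dset d ρ r n := zero_mem_Dset d ρ r n
    set Φ : (Fin l → Vtx d n) →
        ((↥{i : Fin l | f i = i} → Vtx d n) × (Fin l → ↥(Dset d ρ r n))) := fun x =>
      (fun i => x i.1,
       fun i => if h : x i - x (f i) ∈ Dset d ρ r n then ⟨_, h⟩ else ⟨0, hzero⟩) with hΦdef
    have hinj : Set.InjOn Φ (Ffam f) := by
      rintro x ⟨-, -, hxD⟩ y ⟨-, -, hyD⟩ hxy
      have h1 : (fun i : ↥{i : Fin l | f i = i} => x i.1)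
          = fun i : ↥{i : Fin l | f i = i} => y i.1 := congrArg Prod.fst hxy
      have h2 := congrArg Prod.snd hxy
      have hoff : ∀ j, x j - x (f j) = y j - y (f j) := by
        intro j
        have h3 := congrFun h2 j
        simp only [hΦdef, dif_pos (hxD j), dif_pos (hyD j)] at h3
        exact Subtype.ext_iff.mp h3
      funext i
      have hbase : x (f^[l] i) = y (f^[l] i) := congrFun h1 ⟨f^[l] i, hfix i⟩
      have hterm : ∀ t, x (f^[t] i) - x (f^[t + 1] i) = y (f^[t] i) - y (f^[t + 1] i) := by
        intro t
        rw [Function.iterate_succ_apply']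
        exact hoff _
      have htel : x i - x (f^[l] i) = y i - y (f^[l] i) := by
        have hx_tel : ∑ t ∈ Finset.range l, (x (f^[t] i) - x (f^[t + 1] i))
            = x (f^[0] i) - x (f^[l] i) := Finset.sum_range_sub' (fun t => x (f^[t] i)) l
        have hy_tel : ∑ t ∈ Finset.range l, (y (f^[t] i) - y (f^[t + 1] i))
            = y (f^[0] i) - y (f^[l] i) := Finset.sum_range_sub' (fun t => y (f^[t] i)) l
        simp only [Function.iterate_zero_apply] at hx_tel hy_tel
        rw [← hx_tel, ← hy_tel]
        exact Finset.sum_congr rfl fun t _ => hterm t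
      have : x i - x (f^[l] i) = y i - x (f^[l] i) := by rw [htel, hbase]
      exact sub_left_inj.mp this
    have hle : (Ffam f).ncard ≤
        Nat.card ((↥{i : Fin l | f i = i} → Vtx d n) × (Fin l → ↥(Dset d ρ r n))) := by
      have := Set.ncard_le_ncard_of_injOn Φ (fun a _ => Set.mem_univ (Φ a)) hinj
        (Set.toFinite _)
      rwa [Set.ncard_univ] at this
    have hVtx : Nat.card (Vtx d n) = n ^ d := by
      rw [Nat.card_fun, Nat.card_zmod, Nat.card_eq_fintype_card, Fintype.card_fin]
    have hT : Nat.card ((↥{i : Fin l | f i = i} → Vtx d n) × (Fin l → ↥(Dset d ρ r n)))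
        = (n ^ d) ^ ({i : Fin l | f i = i}.ncard) * ((Dset d ρ r n).ncard) ^ l := by
      rw [Nat.card_prod, Nat.card_fun (α := ↥{i : Fin l | f i = i}) (β := Vtx d n),
        Nat.card_fun (α := Fin l) (β := ↥(Dset d ρ r n)), hVtx,
        Nat.card_coe_set_eq, Nat.card_coe_set_eq,
        Nat.card_eq_fintype_card (α := Fin l), Fintype.card_fin]
    have hbound : (n ^ d) ^ ({i : Fin l | f i = i}.ncard) * ((Dset d ρ r n).ncard) ^ l
        ≤ (n ^ d) ^ s * K ^ l := by
      refine Nat.mul_le_mul ?_ (Nat.pow_le_pow_left (ncard_Dset_le d ρ r n) l)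
      exact Nat.pow_le_pow_right (Nat.one_le_iff_ne_zero.mpr (by positivity)) hcard
    calc (Ffam f).ncard ≤ _ := hle
      _ = (n ^ d) ^ ({i : Fin l | f i = i}.ncard) * ((Dset d ρ r n).ncard) ^ l := hT
      _ ≤ (n ^ d) ^ s * K ^ l := hbound
      _ = n ^ (d * s) * K ^ l := by rw [← pow_mul]
  -- put everything together
  have hmain : (tupleClass d ρ p n r l s).ncard ≤ (l ^ l * K ^ l) * n ^ (d * s) := by
    calc (tupleClass d ρ p n r l s).ncard
        ≤ (⋃ f : Fin l → Fin l, Ffam f).ncard :=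
          Set.ncard_le_ncard hcover (Set.toFinite _)
      _ ≤ ∑ f : Fin l → Fin l, (Ffam f).ncard :=
          ncard_iUnion_le_sum _ (fun f => Set.toFinite _)
      _ ≤ ∑ _f : Fin l → Fin l, n ^ (d * s) * K ^ l :=
          Finset.sum_le_sum (fun f _ => hFcard f)
      _ = Fintype.card (Fin l → Fin l) * (n ^ (d * s) * K ^ l) := by
          rw [Finset.sum_const, Finset.card_univ, smul_eq_mul]
      _ = (l ^ l * K ^ l) * n ^ (d * s) := by
          rw [Fintype.card_fun]; simp only [Fintype.card_fin]; ring
  calc (Set.ncard (tupleClass d ρ p n r l s) : ℝ)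
      ≤ ((l ^ l * K ^ l) * n ^ (d * s) : ℕ) := by exact_mod_cast hmain
    _ = ((l ^ l * K ^ l : ℕ) : ℝ) * (n : ℝ) ^ (d * s) := by push_cast; ring

end

end Ising
end
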